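/- Let a, b ∈ ℝ² be linearly independent vectors and let α, β ∈ ℝ be arbitrary real scalars. Then the set { (α‖x‖² + ⟨a,x⟩, β‖x‖² + ⟨b,x⟩) : x ∈ ℝ², ‖x‖ ≤ 1 } is a convex subset of ℝ². -/

import Mathlib

set_option maxHeartbeats 1000000


open scoped RealInnerProductSpace

/-- For linearly independent `a, b ∈ ℝ²` and arbitrary real scalars `α, β`,
the set `{ (α‖x‖² + ⟨a,x⟩, β‖x‖² + ⟨b,x⟩) : ‖x‖ ≤ 1 }` is convex. -/
theorem stmt0 (a b : EuclideanSpace ℝ (Fin 2)) (hab : LinearIndependent ℝ ![a, b])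
    (α β : ℝ) :
    Convex ℝ {p : ℝ × ℝ | ∃ x : EuclideanSpace ℝ (Fin 2), ‖x‖ ≤ 1 ∧
      p = (α * ‖x‖ ^ 2 + ⟪a, x⟫, β * ‖x‖ ^ 2 + ⟪b, x⟫)} := by
  classical
  -- the linear map x ↦ (⟪a,x⟫, ⟪b,x⟫)
  set f : EuclideanSpace ℝ (Fin 2) →ₗ[ℝ] ℝ × ℝ := ((innerSL ℝ a).toLinearMap).prod ((innerSL ℝ b).toLinearMap)
    with hf
  have hfapp : ∀ x : EuclideanSpace ℝ (Fin 2), f x = (⟪a, x⟫, ⟪b, x⟫) := fun x => rfl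
  -- f is injective
  have hcard : Fintype.card (Fin 2) = Module.finrank ℝ (EuclideanSpace ℝ (Fin 2)) := by
    simp [finrank_euclideanSpace_fin]
  let B := basisOfLinearIndependentOfCardEqFinrank hab hcard
  have hB : ⇑B = ![a, b] := coe_basisOfLinearIndependentOfCardEqFinrank hab hcard
  have hinj : Function.Injective f := by
    rw [injective_iff_map_eq_zero]
    intro x hx
    have ha0 : ⟪a, x⟫ = 0 := congrArg Prod.fst hx
    have hb0 : ⟪b, x⟫ = 0 := congrArg Prod.snd hx
    have hall : ∀ v : EuclideanSpace ℝ (Fin 2), ⟪v, x⟫ = 0 := by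
      intro v
      have hv : v ∈ Submodule.span ℝ (Set.range ![a, b]) := by
        rw [← hB, B.span_eq]; trivial
      refine Submodule.span_induction ?_ ?_ ?_ ?_ hv
      · rintro u ⟨i, rfl⟩
        fin_cases i
        · simpa only [Fin.zero_eta, Matrix.cons_val_zero] using ha0
        · simpa only [Fin.mk_one, Matrix.cons_val_one, Matrix.head_cons, Matrix.cons_val_zero] using hb0
      · simp
      · intro u v _ _ hu hv; rw [inner_add_left, hu, hv, add_zero]
      · intro c u _ hu; rw [real_inner_smul_left, hu, mul_zero]
    have := hall x
    exact inner_self_eq_zero.mp this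
  have hsurj : Function.Surjective f :=
    (LinearMap.injective_iff_surjective_of_finrank_eq_finrank (by
      simp [finrank_euclideanSpace_fin])).mp hinj
  obtain ⟨w, hw⟩ := hsurj (α, β)
  have hwa : ⟪a, w⟫ = α := congrArg Prod.fst (hfapp w ▸ hw)
  have hwb : ⟪b, w⟫ = β := congrArg Prod.snd (hfapp w ▸ hw)
  -- key: every "ball point" is in the set
  have hT : ∀ (r : ℝ) (x : EuclideanSpace ℝ (Fin 2)), 0 ≤ r → r ≤ 1 → ‖x‖ ≤ r →
      (α * r ^ 2 + ⟪a, x⟫, β * r ^ 2 + ⟪b, x⟫) ∈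
        {p : ℝ × ℝ | ∃ x : EuclideanSpace ℝ (Fin 2), ‖x‖ ≤ 1 ∧
          p = (α * ‖x‖ ^ 2 + ⟪a, x⟫, β * ‖x‖ ^ 2 + ⟪b, x⟫)} := by
    intro r x hr0 hr1 hxr
    set g : ℝ → ℝ := fun s => ‖x + (r ^ 2 - s ^ 2) • w‖ - s with hg
    have hgc : ContinuousOn g (Set.Icc 0 r) := by fun_prop
    have hgr : g r ≤ 0 := by
      have h : g r = ‖x‖ - r := by simp [hg]
      rw [h]; linarith
    have hg0 : 0 ≤ g 0 := by
      have h : g 0 = ‖x + (r ^ 2) • w‖ := by simp [hg]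
      rw [h]; positivity
    have h0mem : (0 : ℝ) ∈ Set.Icc (g r) (g 0) := ⟨hgr, hg0⟩
    obtain ⟨s, hs, hgs⟩ := intermediate_value_Icc' hr0 hgc h0mem
    have hns : ‖x + (r ^ 2 - s ^ 2) • w‖ = s := by
      have : g s = 0 := hgs
      simpa [hg, sub_eq_zero] using this
    refine ⟨x + (r ^ 2 - s ^ 2) • w, by rw [hns]; exact hs.2.trans hr1, ?_⟩
    rw [hns]
    have hia : ⟪a, x + (r ^ 2 - s ^ 2) • w⟫ = ⟪a, x⟫ + (r ^ 2 - s ^ 2) * α := by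
      rw [inner_add_right, real_inner_smul_right, hwa]
    have hib : ⟪b, x + (r ^ 2 - s ^ 2) • w⟫ = ⟪b, x⟫ + (r ^ 2 - s ^ 2) * β := by
      rw [inner_add_right, real_inner_smul_right, hwb]
    rw [Prod.ext_iff]
    constructor <;> simp only [hia, hib] <;> ring
  -- convexity
  rintro p ⟨x, hx, rfl⟩ q ⟨y, hy, rfl⟩ l m hl hm hlm
  set t := Real.sqrt (l * ‖x‖ ^ 2 + m * ‖y‖ ^ 2) with hts
  have hargnn : 0 ≤ l * ‖x‖ ^ 2 + m * ‖y‖ ^ 2 := by positivity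
  have ht0 : 0 ≤ t := Real.sqrt_nonneg _
  have ht2 : t ^ 2 = l * ‖x‖ ^ 2 + m * ‖y‖ ^ 2 := Real.sq_sqrt hargnn
  have ht1 : t ≤ 1 := by
    rw [hts]
    refine Real.sqrt_le_one.mpr ?_
    have hx2 : ‖x‖ ^ 2 ≤ 1 := by nlinarith [norm_nonneg x]
    have hy2 : ‖y‖ ^ 2 ≤ 1 := by nlinarith [norm_nonneg y]
    nlinarith [mul_le_mul_of_nonneg_left hx2 hl, mul_le_mul_of_nonneg_left hy2 hm]
  have hnorm : ‖l • x + m • y‖ ≤ t := by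
    have h1 : ‖l • x + m • y‖ ≤ l * ‖x‖ + m * ‖y‖ := by
      calc ‖l • x + m • y‖ ≤ ‖l • x‖ + ‖m • y‖ := norm_add_le _ _
        _ = l * ‖x‖ + m * ‖y‖ := by
          rw [norm_smul, norm_smul, Real.norm_of_nonneg hl, Real.norm_of_nonneg hm]
    refine h1.trans ?_
    rw [hts, Real.le_sqrt (by positivity) (by positivity)]
    nlinarith [mul_nonneg (mul_nonneg hl hm) (sq_nonneg (‖x‖ - ‖y‖))]
  have key := hT t (l • x + m • y) ht0 ht1 hnorm
  have hpair : l • ((α * ‖x‖ ^ 2 + ⟪a, x⟫ : ℝ), (β * ‖x‖ ^ 2 + ⟪b, x⟫ : ℝ)) +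
      m • ((α * ‖y‖ ^ 2 + ⟪a, y⟫ : ℝ), (β * ‖y‖ ^ 2 + ⟪b, y⟫ : ℝ)) =
      (α * t ^ 2 + ⟪a, l • x + m • y⟫, β * t ^ 2 + ⟪b, l • x + m • y⟫) := by
    rw [Prod.ext_iff]
    simp only [Prod.smul_mk, Prod.mk_add_mk, smul_eq_mul, inner_add_right,
      real_inner_smul_right, ht2]
    constructor <;> ring
  rw [Set.mem_setOf_eq] at key ⊢
  rw [hpair]
  exact key
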